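/- Let σ be any permutation of {1,...,m}. The set of set partitions of {1,...,m} fixed (setwise, i.e., the permutation permutes the parts) by σ is nonempty and closed under the common refinement operation; moreover, for σ = σ_μ a product of disjoint cycles of lengths μ_1,...,μ_l covering {1,...,m}, every σ_μ-invariant set partition is uniquely of the form η(ξ, f, {g_P}) as constructed from a set partition ξ of {1,...,l}, a function f assigning to each part P of ξ a common divisor f(P) of all μ_i with i ∈ P, and functions g_P: P → {1,...,f(P)} with g_P(min P) = 1. -/
import Mathlib


/-- The permutation `σ_μ` of `{0,…,m-1}` (0-indexed) attached to a composition
`μ = (μ_1,…,μ_l)` of `m`: the product of the cycles on the consecutive blocks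
of sizes `μ_1, …, μ_l`. -/
def sigmaC : List ℕ → ℕ → ℕ
  | [], x => x
  | c :: rest, x => if x < c then (x + 1) % c else c + sigmaC rest (x - c)

/-- `a i = μ_1 + ⋯ + μ_i`. -/
def partialSum (μ : List ℕ) (i : ℕ) : ℕ := (μ.take i).sum

/-- `PP` is a set partition of `{0,…,m-1}`. -/
def IsPartitionOn (m : ℕ) (PP : Set (Set ℕ)) : Prop :=
  (∀ B ∈ PP, B.Nonempty ∧ B ⊆ Set.Iio m) ∧ ∀ x < m, ∃! B, B ∈ PP ∧ x ∈ B

/-- `PP` is fixed (setwise) by `σ`: the permutation permutes the parts. -/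
def Invariant (σ : ℕ → ℕ) (PP : Set (Set ℕ)) : Prop := ∀ B ∈ PP, σ '' B ∈ PP

/-- The common refinement of two set partitions. -/
def commonRefinement (PP QQ : Set (Set ℕ)) : Set (Set ℕ) :=
  {S | ∃ B ∈ PP, ∃ C ∈ QQ, S = B ∩ C ∧ S.Nonempty}

/-- The datum `(ξ, f, {g_P})` of the construction `η`: a set partition `ξ` of
`{0,…,l-1}` (`l` = number of parts of `μ`), a choice for each part `P` of `ξ`
of a common divisor `f P` of the `μ_i`, `i ∈ P`, and normalized functions
`g_P : P → {0,…,f(P)-1}` with `g_P(min P) = 0`. -/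
structure EtaDatum (μ : List ℕ) where
  xi : Set (Set ℕ)
  f : Set ℕ → ℕ
  g : Set ℕ → ℕ → ℕ
  hxi : IsPartitionOn μ.length xi
  hf : ∀ P ∈ xi, ∀ i ∈ P, f P ∣ μ.getD i 0
  hf0 : ∀ P, P ∉ xi → f P = 0
  hg : ∀ P ∈ xi, ∀ i ∈ P, g P i < f P
  hg0 : ∀ P i, P ∉ xi ∨ i ∉ P → g P i = 0
  hgmin : ∀ P ∈ xi, g P (sInf P) = 0

/-- The set `N_P = ∪_{i∈P} {a_i + g_P(i) + j·f(P) : 0 ≤ j < μ_i / f(P)}`. -/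
def NP (μ : List ℕ) (D : EtaDatum μ) (P : Set ℕ) : Set ℕ :=
  ⋃ i ∈ P, {x | ∃ j : ℕ, j * D.f P < μ.getD i 0 ∧
    x = partialSum μ i + D.g P i + j * D.f P}

/-- The set partition `η(ξ, f, {g_P})`, whose parts are the sets
`σ_μ^r(N_P)` for parts `P` of `ξ` and `r ≥ 1`. -/
def eta (μ : List ℕ) (D : EtaDatum μ) : Set (Set ℕ) :=
  {S | ∃ P ∈ D.xi, ∃ r : ℕ, 1 ≤ r ∧ S = (sigmaC μ)^[r] '' NP μ D P}

namespace Aux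


lemma partialSum_zero (μ : List ℕ) : partialSum μ 0 = 0 := rfl

lemma partialSum_cons_succ (c : ℕ) (rest : List ℕ) (i : ℕ) :
    partialSum (c :: rest) (i + 1) = c + partialSum rest i := by
  unfold partialSum; simp [List.take_succ_cons]

lemma partialSum_succ (μ : List ℕ) (i : ℕ) (hi : i < μ.length) :
    partialSum μ (i + 1) = partialSum μ i + μ.getD i 0 := by
  unfold partialSum
  rw [List.take_succ]
  rw [List.getD_eq_getElem?_getD, List.getElem?_eq_getElem hi, Option.getD_some,
    List.sum_append, Option.toList_some, List.sum_cons, List.sum_nil, Nat.add_zero]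

lemma partialSum_mono (μ : List ℕ) {i j : ℕ} (h : i ≤ j) :
    partialSum μ i ≤ partialSum μ j := by
  unfold partialSum
  obtain ⟨k, rfl⟩ := Nat.exists_eq_add_of_le h
  rw [List.take_add, List.sum_append]
  omega

lemma partialSum_length (μ : List ℕ) : partialSum μ μ.length = μ.sum := by
  simp [partialSum]

lemma partialSum_block_le (μ : List ℕ) (i : ℕ) (hi : i < μ.length) :
    partialSum μ i + μ.getD i 0 ≤ μ.sum := by
  rw [← partialSum_succ μ i hi, ← partialSum_length]
  exact partialSum_mono μ hi

/-- σ acts on block i by rotation. -/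
lemma sigmaC_block (μ : List ℕ) (i o : ℕ) (hi : i < μ.length) (ho : o < μ.getD i 0) :
    sigmaC μ (partialSum μ i + o) = partialSum μ i + ((o + 1) % μ.getD i 0) := by
  induction μ generalizing i with
  | nil => simp at hi
  | cons c rest ih =>
    cases i with
    | zero =>
      rw [List.getD_cons_zero] at ho
      simp only [partialSum_zero, Nat.zero_add, List.getD_cons_zero]
      simp [sigmaC, ho]
    | succ i =>
      rw [List.getD_cons_succ] at ho
      have hi' : i < rest.length := by simpa using hi
      rw [partialSum_cons_succ, List.getD_cons_succ]
      have hge : ¬ (c + partialSum rest i + o < c) := by omega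
      simp only [sigmaC, if_neg hge]
      have h2 : c + partialSum rest i + o - c = partialSum rest i + o := by omega
      rw [h2, ih i hi' ho]
      omega

lemma sigmaC_iterate (μ : List ℕ) (i o r : ℕ) (hi : i < μ.length) (ho : o < μ.getD i 0) :
    (sigmaC μ)^[r] (partialSum μ i + o) = partialSum μ i + ((o + r) % μ.getD i 0) := by
  induction r with
  | zero => simp only [Function.iterate_zero, id, Nat.add_zero, Nat.mod_eq_of_lt ho]
  | succ r ihr =>
    rw [Function.iterate_succ_apply', ihr]
    have hlt : (o + r) % μ.getD i 0 < μ.getD i 0 := Nat.mod_lt _ (by omega)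
    rw [sigmaC_block μ i _ hi hlt, Nat.mod_add_mod]
    ring_nf

/-- block decomposition -/
lemma exists_block (μ : List ℕ) (x : ℕ) (hx : x < μ.sum) :
    ∃ i, i < μ.length ∧ partialSum μ i ≤ x ∧ x < partialSum μ i + μ.getD i 0 := by
  induction μ generalizing x with
  | nil => simp at hx
  | cons c rest ih =>
    by_cases h : x < c
    · exact ⟨0, by simp, by simp [partialSum_zero], by simpa [partialSum_zero]⟩
    · have hx' : x - c < rest.sum := by simp at hx; omega
      obtain ⟨i, hi, h1, h2⟩ := ih (x - c) hx'
      refine ⟨i + 1, by simpa using hi, ?_, ?_⟩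
      · rw [partialSum_cons_succ]; omega
      · rw [partialSum_cons_succ, List.getD_cons_succ]; omega

lemma block_unique (μ : List ℕ) {x i j : ℕ} (hi : i < μ.length) (hj : j < μ.length)
    (h1 : partialSum μ i ≤ x) (h2 : x < partialSum μ i + μ.getD i 0)
    (h3 : partialSum μ j ≤ x) (h4 : x < partialSum μ j + μ.getD j 0) : i = j := by
  by_contra hne
  rcases Nat.lt_or_ge i j with h | h
  · have : partialSum μ (i+1) ≤ partialSum μ j := partialSum_mono μ h
    rw [partialSum_succ μ i hi] at this; omega
  · have hji : j < i := by omega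
    have : partialSum μ (j+1) ≤ partialSum μ i := partialSum_mono μ hji
    rw [partialSum_succ μ j hj] at this; omega



lemma part1 (m : ℕ) (σ : ℕ → ℕ) (hσ : Set.BijOn σ (Set.Iio m) (Set.Iio m)) :
    {PP : Set (Set ℕ) | IsPartitionOn m PP ∧ Invariant σ PP}.Nonempty ∧
      ∀ PP QQ, IsPartitionOn m PP ∧ Invariant σ PP →
        IsPartitionOn m QQ ∧ Invariant σ QQ →
        IsPartitionOn m (commonRefinement PP QQ) ∧
          Invariant σ (commonRefinement PP QQ) := by
  constructor
  · refine ⟨{S | ∃ x < m, S = {x}}, ⟨⟨?_, ?_⟩, ?_⟩⟩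
    · rintro B ⟨x, hx, rfl⟩
      exact ⟨⟨x, rfl⟩, by simpa using hx⟩
    · intro x hx
      refine ⟨{x}, ⟨⟨x, hx, rfl⟩, rfl⟩, ?_⟩
      rintro C ⟨⟨y, hy, rfl⟩, hxy⟩
      simp_all
    · rintro B ⟨x, hx, rfl⟩
      exact ⟨σ x, hσ.mapsTo hx, by simp⟩
  · rintro PP QQ ⟨hP, hPi⟩ ⟨hQ, hQi⟩
    constructor
    · constructor
      · rintro S ⟨B, hB, C, hC, rfl, hne⟩
        exact ⟨hne, fun x hx => (hP.1 B hB).2 hx.1⟩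
      · intro x hx
        obtain ⟨B, ⟨hB, hxB⟩, hBu⟩ := hP.2 x hx
        obtain ⟨C, ⟨hC, hxC⟩, hCu⟩ := hQ.2 x hx
        refine ⟨B ∩ C, ⟨⟨B, hB, C, hC, rfl, ⟨x, hxB, hxC⟩⟩, hxB, hxC⟩, ?_⟩
        rintro S ⟨⟨B', hB', C', hC', rfl, hne⟩, hxB', hxC'⟩
        rw [hBu B' ⟨hB', hxB'⟩, hCu C' ⟨hC', hxC'⟩]
    · rintro S ⟨B, hB, C, hC, rfl, hne⟩
      refine ⟨σ '' B, hPi B hB, σ '' C, hQi C hC, ?_, hne.image σ⟩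
      apply Set.Subset.antisymm
      · rintro y ⟨x, hx, rfl⟩
        exact ⟨⟨x, hx.1, rfl⟩, ⟨x, hx.2, rfl⟩⟩
      · rintro y ⟨⟨b, hb, rfl⟩, ⟨c, hc, hbc⟩⟩
        have hbm : b < m := (hP.1 B hB).2 hb
        have hcm : c < m := (hQ.1 C hC).2 hc
        have : c = b := hσ.injOn hcm hbm hbc
        subst this
        exact ⟨c, ⟨hb, hc⟩, rfl⟩





-- new material
lemma w_pos {μ : List ℕ} (hpos : ∀ c ∈ μ, 0 < c) {j : ℕ} (hj : j < μ.length) :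
    0 < μ.getD j 0 := by
  have : μ.getD j 0 = μ[j] := by
    rw [List.getD_eq_getElem?_getD, List.getElem?_eq_getElem hj, Option.getD_some]
  rw [this]
  exact hpos _ (μ.getElem_mem hj)

lemma exists_block' (μ : List ℕ) (x : ℕ) (hx : x < μ.sum) :
    ∃ i o, i < μ.length ∧ o < μ.getD i 0 ∧ x = partialSum μ i + o := by
  obtain ⟨i, hi, h1, h2⟩ := exists_block μ x hx
  exact ⟨i, x - partialSum μ i, hi, by omega, by omega⟩

lemma block_lt_sum (μ : List ℕ) {i o : ℕ} (hi : i < μ.length) (ho : o < μ.getD i 0) :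
    partialSum μ i + o < μ.sum := by
  have := partialSum_block_le μ i hi; omega

lemma part_eq {m : ℕ} {PP : Set (Set ℕ)} (hPP : IsPartitionOn m PP) {C D : Set ℕ} {x : ℕ}
    (hC : C ∈ PP) (hD : D ∈ PP) (hxC : x ∈ C) (hxD : x ∈ D) : C = D := by
  have hx : x < m := (hPP.1 C hC).2 hxC
  obtain ⟨B, _, hu⟩ := hPP.2 x hx
  rw [hu C ⟨hC, hxC⟩, hu D ⟨hD, hxD⟩]

lemma iterate_image_add (σ : ℕ → ℕ) (s t : ℕ) (C : Set ℕ) :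
    σ^[s + t] '' C = σ^[s] '' (σ^[t] '' C) := by
  rw [Function.iterate_add, Set.image_comp]

lemma inv_iterate {σ : ℕ → ℕ} {PP : Set (Set ℕ)} (hInv : Invariant σ PP) (r : ℕ) {C : Set ℕ}
    (hC : C ∈ PP) : σ^[r] '' C ∈ PP := by
  induction r with
  | zero => simpa using hC
  | succ r ih =>
    have : σ^[r + 1] '' C = σ '' (σ^[r] '' C) := by
      rw [Function.iterate_succ', Set.image_comp]
    rw [this]
    exact hInv _ ih

lemma fix_pow {σ : ℕ → ℕ} {C : Set ℕ} {d : ℕ} (h : σ^[d] '' C = C) (k : ℕ) :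
    σ^[k * d] '' C = C := by
  induction k with
  | zero => simp
  | succ k ih => rw [Nat.succ_mul, iterate_image_add, h, ih]

lemma per_dvd {σ : ℕ → ℕ} {C : Set ℕ} {d r : ℕ} (hd : 0 < d)
    (hfix : σ^[d] '' C = C) (hmin : ∀ s, 0 < s → s < d → σ^[s] '' C ≠ C)
    (hr : σ^[r] '' C = C) : d ∣ r := by
  have hdecomp : r = r % d + r / d * d := by
    have := Nat.div_add_mod r d
    rw [Nat.mul_comm] at this
    omega
  have h2 : σ^[r % d] '' C = C := by
    have := iterate_image_add σ (r % d) (r / d * d) C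
    rw [fix_pow hfix (r / d)] at this
    rw [← hdecomp] at this
    rw [← this, hr]
  rcases Nat.eq_zero_or_pos (r % d) with h | h
  · exact Nat.dvd_of_mod_eq_zero h
  · exact absurd h2 (hmin _ h (Nat.mod_lt _ hd))

/-- if a part of PP meets block j, it is fixed by σ^[μ_j]. -/
lemma fix_mu {μ : List ℕ} {PP : Set (Set ℕ)} (hpos : ∀ c ∈ μ, 0 < c)
    (hPP : IsPartitionOn μ.sum PP) (hInv : Invariant (sigmaC μ) PP)
    {C : Set ℕ} (hC : C ∈ PP) {j o : ℕ} (hj : j < μ.length) (ho : o < μ.getD j 0)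
    (hmem : partialSum μ j + o ∈ C) : (sigmaC μ)^[μ.getD j 0] '' C = C := by
  have hfx : (sigmaC μ)^[μ.getD j 0] (partialSum μ j + o) = partialSum μ j + o := by
    rw [sigmaC_iterate μ j o _ hj ho, Nat.add_mod_right, Nat.mod_eq_of_lt ho]
  exact part_eq hPP (inv_iterate hInv _ hC) hC ⟨_, hmem, hfx⟩ hmem

lemma meets_iterate {μ : List ℕ} {PP : Set (Set ℕ)} (hpos : ∀ c ∈ μ, 0 < c)
    (hPP : IsPartitionOn μ.sum PP) {C : Set ℕ} (hC : C ∈ PP) (r : ℕ)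
    {j : ℕ} (hj : j < μ.length) :
    (∃ o, o < μ.getD j 0 ∧ partialSum μ j + o ∈ (sigmaC μ)^[r] '' C) ↔
      (∃ o, o < μ.getD j 0 ∧ partialSum μ j + o ∈ C) := by
  constructor
  · rintro ⟨o, ho, x, hxC, hxo⟩
    have hxm : x < μ.sum := (hPP.1 C hC).2 hxC
    obtain ⟨i, o', hi, ho', rfl⟩ := exists_block' μ x hxm
    rw [sigmaC_iterate μ i o' r hi ho'] at hxo
    have hlt : (o' + r) % μ.getD i 0 < μ.getD i 0 := Nat.mod_lt _ (w_pos hpos hi)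
    have : i = j := by
      apply block_unique μ hi hj (x := partialSum μ i + (o' + r) % μ.getD i 0)
      · omega
      · omega
      · omega
      · omega
    subst this
    exact ⟨o', ho', hxC⟩
  · rintro ⟨o, ho, hoC⟩
    have hlt : (o + r) % μ.getD j 0 < μ.getD j 0 := Nat.mod_lt _ (w_pos hpos hj)
    exact ⟨(o + r) % μ.getD j 0, hlt, ⟨_, hoC, sigmaC_iterate μ j o r hj ho⟩⟩


/-- Characterization of offsets of a part within a block. -/
lemma offsets_char {μ : List ℕ} {PP : Set (Set ℕ)} (hpos : ∀ c ∈ μ, 0 < c)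
    (hPP : IsPartitionOn μ.sum PP) (hInv : Invariant (sigmaC μ) PP)
    {C : Set ℕ} (hC : C ∈ PP) {j o₀ d : ℕ} (hj : j < μ.length) (ho₀ : o₀ < μ.getD j 0)
    (hmem : partialSum μ j + o₀ ∈ C) (hd : 0 < d)
    (hfix : (sigmaC μ)^[d] '' C = C)
    (hmin : ∀ s, 0 < s → s < d → (sigmaC μ)^[s] '' C ≠ C)
    (hdvd : d ∣ μ.getD j 0) :
    ∀ o, o < μ.getD j 0 → (partialSum μ j + o ∈ C ↔ o % d = o₀ % d) := by
  set w := μ.getD j 0 with hw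
  have hwpos : 0 < w := w_pos hpos hj
  have hdw : d ≤ w := Nat.le_of_dvd hwpos hdvd
  -- moving up by d
  have step_up : ∀ o, o < w → partialSum μ j + o ∈ C →
      partialSum μ j + (o + d) % w ∈ C := by
    intro o ho hoC
    have : (sigmaC μ)^[d] (partialSum μ j + o) = partialSum μ j + (o + d) % w :=
      sigmaC_iterate μ j o d hj ho
    rw [← hfix]
    exact ⟨_, hoC, this⟩
  -- moving down by d
  have step_down : ∀ o, o < w → d ≤ o → partialSum μ j + o ∈ C →
      partialSum μ j + (o - d) ∈ C := by
    intro o ho hdo hoC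
    obtain ⟨k, hk⟩ := hdvd
    have hk1 : 1 ≤ k := by nlinarith [hwpos, hk]
    have hfix' : (sigmaC μ)^[w - d] '' C = C := by
      have : w - d = (k - 1) * d := by
        rcases k with _ | k'
        · omega
        · have h2 : d * (k' + 1) = k' * d + d := by ring
          simp only [Nat.add_sub_cancel]
          omega
      rw [this]; exact fix_pow hfix _
    have hit : (sigmaC μ)^[w - d] (partialSum μ j + o) = partialSum μ j + (o - d) := by
      rw [sigmaC_iterate μ j o _ hj ho, ← hw]
      congr 1
      have h1 : o + (w - d) = (o - d) + w := by omega
      rw [h1, Nat.add_mod_right, Nat.mod_eq_of_lt (by omega)]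
    rw [← hfix']
    exact ⟨_, hoC, hit⟩
  -- reduce mod d
  have mod_mem : ∀ o, o < w → partialSum μ j + o ∈ C → partialSum μ j + o % d ∈ C := by
    intro o
    induction o using Nat.strong_induction_on with
    | _ o ih =>
      intro ho hoC
      by_cases h : o < d
      · rwa [Nat.mod_eq_of_lt h]
      · have h1 := step_down o ho (by omega) hoC
        have h2 := ih (o - d) (by omega) (by omega) h1
        have : (o - d) % d = o % d := by
          conv_rhs => rw [show o = (o - d) + d by omega]
          rw [Nat.add_mod_right]
        rwa [this] at h2
  -- uniqueness below d
  have uniq_small : ∀ o o', o < d → o' < d → partialSum μ j + o ∈ C →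
      partialSum μ j + o' ∈ C → o = o' := by
    have key : ∀ o o', o ≤ o' → o < d → o' < d → partialSum μ j + o ∈ C →
        partialSum μ j + o' ∈ C → o = o' := by
      intro o o' hle ho ho' hoC ho'C
      by_contra hne
      have hs : 0 < o' - o := by omega
      have hit : (sigmaC μ)^[o' - o] (partialSum μ j + o) = partialSum μ j + o' := by
        rw [sigmaC_iterate μ j o _ hj (by omega), ← hw]
        congr 1
        rw [Nat.mod_eq_of_lt (by omega)]
        omega
      have : (sigmaC μ)^[o' - o] '' C = C :=
        part_eq hPP (inv_iterate hInv _ hC) hC ⟨_, hoC, hit⟩ ho'C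
      exact hmin (o' - o) hs (by omega) this
    intro o o' ho ho' hoC ho'C
    rcases Nat.le_total o o' with h | h
    · exact key o o' h ho ho' hoC ho'C
    · exact (key o' o h ho' ho ho'C hoC).symm
  intro o ho
  constructor
  · intro hoC
    have h1 := mod_mem o ho hoC
    have h2 := mod_mem o₀ ho₀ hmem
    exact uniq_small _ _ (Nat.mod_lt _ hd) (Nat.mod_lt _ hd) h1 h2
  · intro hmod
    -- climb from o₀ % d up to o
    have base : partialSum μ j + o % d ∈ C := by
      rw [hmod]; exact mod_mem o₀ ho₀ hmem
    have : ∀ t, o % d + t * d < w → partialSum μ j + (o % d + t * d) ∈ C := by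
      intro t
      induction t with
      | zero => simpa using fun _ => base
      | succ t ih =>
        intro ht
        have ht' : o % d + t * d < w := by
          have : t * d ≤ (t + 1) * d := by nlinarith
          omega
        have h1 := step_up _ ht' (ih ht')
        have : (o % d + t * d + d) % w = o % d + (t + 1) * d := by
          rw [Nat.mod_eq_of_lt (by nlinarith [ht])]
          ring
        rwa [this] at h1
    have hdecomp : o = o % d + o / d * d := by
      have := Nat.div_add_mod o d
      rw [Nat.mul_comm] at this
      omega
    have := this (o / d) (by omega)
    rwa [← hdecomp] at this


open Classical in
noncomputable def Bpart (PP : Set (Set ℕ)) (x : ℕ) : Set ℕ :=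
  if h : ∃ B, B ∈ PP ∧ x ∈ B then h.choose else ∅

lemma Bpart_mem {m : ℕ} {PP : Set (Set ℕ)} (hPP : IsPartitionOn m PP) {x : ℕ} (hx : x < m) :
    Bpart PP x ∈ PP ∧ x ∈ Bpart PP x := by
  have h : ∃ B, B ∈ PP ∧ x ∈ B := (hPP.2 x hx).exists
  rw [Bpart, dif_pos h]
  exact h.choose_spec

lemma Bpart_eq {m : ℕ} {PP : Set (Set ℕ)} (hPP : IsPartitionOn m PP) {C : Set ℕ} {x : ℕ}
    (hC : C ∈ PP) (hx : x ∈ C) : C = Bpart PP x := by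
  have hxm : x < m := (hPP.1 C hC).2 hx
  exact part_eq hPP hC (Bpart_mem hPP hxm).1 hx (Bpart_mem hPP hxm).2

lemma a_lt {μ : List ℕ} (hpos : ∀ c ∈ μ, 0 < c) {i : ℕ} (hi : i < μ.length) :
    partialSum μ i < μ.sum := by
  have := block_lt_sum μ hi (w_pos hpos hi)
  omega

def canP (μ : List ℕ) (PP : Set (Set ℕ)) (i : ℕ) : Set ℕ :=
  {j | j < μ.length ∧ ∃ o, o < μ.getD j 0 ∧ partialSum μ j + o ∈ Bpart PP (partialSum μ i)}

def canXi (μ : List ℕ) (PP : Set (Set ℕ)) : Set (Set ℕ) :=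
  {S | ∃ i, i < μ.length ∧ S = canP μ PP i}

open Classical in
noncomputable def canD (μ : List ℕ) (PP : Set (Set ℕ)) (i : ℕ) : ℕ :=
  if h : ∃ r, 0 < r ∧
      (sigmaC μ)^[r] '' Bpart PP (partialSum μ i) = Bpart PP (partialSum μ i) then
    Nat.find h else 0

open Classical in
noncomputable def canF (μ : List ℕ) (PP : Set (Set ℕ)) (Q : Set ℕ) : ℕ :=
  if Q ∈ canXi μ PP then canD μ PP (sInf Q) else 0

open Classical in
noncomputable def canG (μ : List ℕ) (PP : Set (Set ℕ)) (Q : Set ℕ) (j : ℕ) : ℕ :=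
  if Q ∈ canXi μ PP ∧ j ∈ Q then
    sInf {o | partialSum μ j + o ∈ Bpart PP (partialSum μ (sInf Q))} else 0

lemma fix_transfer {σ : ℕ → ℕ} {C C' : Set ℕ} {s r : ℕ} (h : C' = σ^[s] '' C)
    (hfix : σ^[r] '' C = C) : σ^[r] '' C' = C' := by
  rw [h, ← iterate_image_add, Nat.add_comm, iterate_image_add, hfix]

section Canonical

variable {μ : List ℕ} {PP : Set (Set ℕ)} (hpos : ∀ c ∈ μ, 0 < c)
  (hPP : IsPartitionOn μ.sum PP) (hInv : Invariant (sigmaC μ) PP)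

include hpos hPP hInv

omit hInv in
lemma mem_canP_self {i : ℕ} (hi : i < μ.length) : i ∈ canP μ PP i := by
  refine ⟨hi, 0, w_pos hpos hi, ?_⟩
  rw [Nat.add_zero]
  exact (Bpart_mem hPP (a_lt hpos hi)).2

/-- a part containing `a j + o` is an iterate image of the part of `a j`. -/
lemma part_is_iterate {C : Set ℕ} (hC : C ∈ PP) {j o : ℕ} (hj : j < μ.length)
    (ho : o < μ.getD j 0) (hmem : partialSum μ j + o ∈ C) :
    C = (sigmaC μ)^[o] '' Bpart PP (partialSum μ j) := by
  have hBj := Bpart_mem hPP (a_lt hpos hj)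
  have hit : (sigmaC μ)^[o] (partialSum μ j) = partialSum μ j + o := by
    have := sigmaC_iterate μ j 0 o hj (w_pos hpos hj)
    rwa [Nat.add_zero, Nat.zero_add, Nat.mod_eq_of_lt ho] at this
  exact part_eq hPP hC (inv_iterate hInv o hBj.1) hmem ⟨_, hBj.2, hit⟩

lemma canP_eq {i j : ℕ} (hi : i < μ.length) (hj : j ∈ canP μ PP i) :
    canP μ PP j = canP μ PP i := by
  obtain ⟨hjl, o, ho, hmem⟩ := hj
  have hBi := Bpart_mem hPP (a_lt hpos hi)
  have hiter : Bpart PP (partialSum μ i) = (sigmaC μ)^[o] '' Bpart PP (partialSum μ j) :=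
    part_is_iterate hpos hPP hInv hBi.1 hjl ho hmem
  have hBj := Bpart_mem hPP (a_lt hpos hjl)
  ext j'
  simp only [canP, Set.mem_setOf_eq]
  constructor
  · rintro ⟨hj'l, hme⟩
    refine ⟨hj'l, ?_⟩
    rw [hiter]
    exact (meets_iterate hpos hPP hBj.1 o hj'l).mpr hme
  · rintro ⟨hj'l, hme⟩
    rw [hiter] at hme
    exact ⟨hj'l, (meets_iterate hpos hPP hBj.1 o hj'l).mp hme⟩

lemma canXi_partition : IsPartitionOn μ.length (canXi μ PP) := by
  constructor
  · rintro S ⟨i, hi, rfl⟩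
    exact ⟨⟨i, mem_canP_self hpos hPP hi⟩, fun j hj => hj.1⟩
  · intro i hi
    refine ⟨canP μ PP i, ⟨⟨i, hi, rfl⟩, mem_canP_self hpos hPP hi⟩, ?_⟩
    rintro S ⟨⟨i', hi', rfl⟩, hiS⟩
    exact (canP_eq hpos hPP hInv hi' hiS).symm

lemma canXi_mem {Q : Set ℕ} (hQ : Q ∈ canXi μ PP) :
    sInf Q < μ.length ∧ sInf Q ∈ Q ∧ Q = canP μ PP (sInf Q) := by
  obtain ⟨i, hi, rfl⟩ := hQ
  have hne : (canP μ PP i).Nonempty := ⟨i, mem_canP_self hpos hPP hi⟩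
  have hmem : sInf (canP μ PP i) ∈ canP μ PP i := Nat.sInf_mem hne
  exact ⟨hmem.1, hmem, (canP_eq hpos hPP hInv hi hmem).symm⟩

lemma canD_spec {i : ℕ} (hi : i < μ.length) :
    0 < canD μ PP i ∧
      (sigmaC μ)^[canD μ PP i] '' Bpart PP (partialSum μ i) = Bpart PP (partialSum μ i) ∧
      ∀ s, 0 < s → s < canD μ PP i →
        (sigmaC μ)^[s] '' Bpart PP (partialSum μ i) ≠ Bpart PP (partialSum μ i) := by
  have hB := Bpart_mem hPP (a_lt hpos hi)
  have hex : ∃ r, 0 < r ∧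
      (sigmaC μ)^[r] '' Bpart PP (partialSum μ i) = Bpart PP (partialSum μ i) := by
    refine ⟨μ.getD i 0, w_pos hpos hi, ?_⟩
    refine fix_mu hpos hPP hInv hB.1 hi (w_pos hpos hi) ?_
    rw [Nat.add_zero]
    exact hB.2
  classical
  unfold canD
  rw [dif_pos hex]
  refine ⟨(Nat.find_spec hex).1, (Nat.find_spec hex).2, ?_⟩
  intro s hs hlt hfix
  exact (Nat.find_min hex hlt) ⟨hs, hfix⟩

lemma canD_le {i : ℕ} (hi : i < μ.length) {r : ℕ} (hr : 0 < r)
    (hfix : (sigmaC μ)^[r] '' Bpart PP (partialSum μ i) = Bpart PP (partialSum μ i)) :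
    canD μ PP i ≤ r := by
  by_contra h
  exact (canD_spec hpos hPP hInv hi).2.2 r hr (by omega) hfix

lemma canD_dvd {i : ℕ} (hi : i < μ.length) {j : ℕ} (hj : j ∈ canP μ PP i) :
    canD μ PP i ∣ μ.getD j 0 := by
  obtain ⟨hjl, o, ho, hmem⟩ := hj
  have hB := Bpart_mem hPP (a_lt hpos hi)
  have hfixj := fix_mu hpos hPP hInv hB.1 hjl ho hmem
  obtain ⟨h1, h2, h3⟩ := canD_spec hpos hPP hInv hi
  exact per_dvd h1 h2 h3 hfixj

lemma canD_congr {i j : ℕ} (hi : i < μ.length) (hj : j ∈ canP μ PP i) :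
    canD μ PP j = canD μ PP i := by
  obtain ⟨hjl, o, ho, hmem⟩ := hj
  have hBi := Bpart_mem hPP (a_lt hpos hi)
  have hBj := Bpart_mem hPP (a_lt hpos hjl)
  have hiter1 : Bpart PP (partialSum μ i) = (sigmaC μ)^[o] '' Bpart PP (partialSum μ j) :=
    part_is_iterate hpos hPP hInv hBi.1 hjl ho hmem
  have hiter2 : Bpart PP (partialSum μ j) =
      (sigmaC μ)^[μ.getD j 0 - o] '' Bpart PP (partialSum μ i) := by
    have hit : (sigmaC μ)^[μ.getD j 0 - o] (partialSum μ j + o) = partialSum μ j := by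
      rw [sigmaC_iterate μ j o _ hjl ho]
      have : o + (μ.getD j 0 - o) = μ.getD j 0 := by omega
      rw [this, Nat.mod_self, Nat.add_zero]
    exact part_eq hPP hBj.1 (inv_iterate hInv _ hBi.1) hBj.2 ⟨_, hmem, hit⟩
  obtain ⟨hi1, hi2, _⟩ := canD_spec hpos hPP hInv hi
  obtain ⟨hj1, hj2, _⟩ := canD_spec hpos hPP hInv hjl
  have le1 : canD μ PP j ≤ canD μ PP i :=
    canD_le hpos hPP hInv hjl hi1 (fix_transfer hiter2 hi2)
  have le2 : canD μ PP i ≤ canD μ PP j :=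
    canD_le hpos hPP hInv hi hj1 (fix_transfer hiter1 hj2)
  omega

lemma canG_spec {Q : Set ℕ} (hQ : Q ∈ canXi μ PP) {j : ℕ} (hj : j ∈ Q) :
    canG μ PP Q j < canF μ PP Q ∧
      ∀ o, o < μ.getD j 0 →
        (partialSum μ j + o ∈ Bpart PP (partialSum μ (sInf Q)) ↔
          o % canF μ PP Q = canG μ PP Q j) := by
  obtain ⟨hi0, hi0mem, hQeq⟩ := canXi_mem hpos hPP hInv hQ
  have hjP : j ∈ canP μ PP (sInf Q) := by rw [← hQeq]; exact hj
  obtain ⟨hjl, o₀, ho₀, hmem⟩ := hjP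
  have hB := Bpart_mem hPP (a_lt hpos hi0)
  obtain ⟨hd1, hd2, hd3⟩ := canD_spec hpos hPP hInv hi0
  have hdvd : canD μ PP (sInf Q) ∣ μ.getD j 0 :=
    canD_dvd hpos hPP hInv hi0 (by rw [← hQeq]; exact hj)
  have hchar := offsets_char hpos hPP hInv hB.1 hjl ho₀ hmem hd1 hd2 hd3 hdvd
  have hF : canF μ PP Q = canD μ PP (sInf Q) := by unfold canF; rw [if_pos hQ]
  set d := canD μ PP (sInf Q) with hdd
  have hdw : d ≤ μ.getD j 0 := Nat.le_of_dvd (w_pos hpos hjl) hdvd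
  set g0 := o₀ % d with hg0
  have hg0d : g0 < d := Nat.mod_lt _ hd1
  have hg0mem : partialSum μ j + g0 ∈ Bpart PP (partialSum μ (sInf Q)) := by
    rw [hchar g0 (by omega)]
    exact Nat.mod_eq_of_lt hg0d
  have hGl : canG μ PP Q j = g0 := by
    unfold canG
    rw [if_pos ⟨hQ, hj⟩]
    have hlb : ∀ o ∈ {o | partialSum μ j + o ∈ Bpart PP (partialSum μ (sInf Q))}, g0 ≤ o := by
      intro o ho
      by_cases how : o < μ.getD j 0
      · have := (hchar o how).mp ho
        have := Nat.mod_le o d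
        omega
      · omega
    exact Nat.le_antisymm (Nat.sInf_le hg0mem) (hlb _ (Nat.sInf_mem ⟨g0, hg0mem⟩))
  rw [hGl, hF]
  refine ⟨hg0d, ?_⟩
  intro o ho
  rw [hchar o ho]

lemma canG_min0 {Q : Set ℕ} (hQ : Q ∈ canXi μ PP) : canG μ PP Q (sInf Q) = 0 := by
  obtain ⟨hi0, hi0mem, hQeq⟩ := canXi_mem hpos hPP hInv hQ
  have hB := Bpart_mem hPP (a_lt hpos hi0)
  have hspec := canG_spec hpos hPP hInv hQ hi0mem
  have h0 := (hspec.2 0 (w_pos hpos hi0)).mp (by rw [Nat.add_zero]; exact hB.2)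
  have : (0 : ℕ) % canF μ PP Q = 0 := Nat.zero_mod _
  omega

omit hpos hPP hInv in
lemma mult_bound {t f w : ℕ} (hf : 0 < f) (hdvd : f ∣ w) (ht : t * f < w) :
    t * f + f ≤ w := by
  obtain ⟨k, rfl⟩ := hdvd
  have : t < k := by
    by_contra h
    push_neg at h
    nlinarith
  nlinarith

lemma Bpart_shift {j : ℕ} (hjl : j < μ.length) {C : Set ℕ} (hC : C ∈ PP) {g : ℕ}
    (hg : g < μ.getD j 0) (hmem : partialSum μ j + g ∈ C) :
    Bpart PP (partialSum μ j) = (sigmaC μ)^[μ.getD j 0 - g] '' C := by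
  have hBj := Bpart_mem hPP (a_lt hpos hjl)
  have hit : (sigmaC μ)^[μ.getD j 0 - g] (partialSum μ j + g) = partialSum μ j := by
    rw [sigmaC_iterate μ j g _ hjl hg]
    have : g + (μ.getD j 0 - g) = μ.getD j 0 := by omega
    rw [this, Nat.mod_self, Nat.add_zero]
  exact part_eq hPP hBj.1 (inv_iterate hInv _ hC) hBj.2 ⟨_, hmem, hit⟩

end Canonical

noncomputable def canDatum (μ : List ℕ) (PP : Set (Set ℕ)) (hpos : ∀ c ∈ μ, 0 < c)
    (hPP : IsPartitionOn μ.sum PP) (hInv : Invariant (sigmaC μ) PP) : EtaDatum μ where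
  xi := canXi μ PP
  f := canF μ PP
  g := canG μ PP
  hxi := canXi_partition hpos hPP hInv
  hf := by
    intro Q hQ i hiQ
    unfold canF
    rw [if_pos hQ]
    obtain ⟨hi0, hi0mem, hQeq⟩ := canXi_mem hpos hPP hInv hQ
    exact canD_dvd hpos hPP hInv hi0 (hQeq ▸ hiQ)
  hf0 := fun Q hQ => by unfold canF; rw [if_neg hQ]
  hg := fun Q hQ i hiQ => (canG_spec hpos hPP hInv hQ hiQ).1
  hg0 := fun Q i h => by
    unfold canG
    rw [if_neg]
    tauto
  hgmin := fun Q hQ => canG_min0 hpos hPP hInv hQ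

section Canonical2

variable {μ : List ℕ} {PP : Set (Set ℕ)} (hpos : ∀ c ∈ μ, 0 < c)
  (hPP : IsPartitionOn μ.sum PP) (hInv : Invariant (sigmaC μ) PP)

include hpos hPP hInv

lemma canNP {Q : Set ℕ} (hQ : Q ∈ canXi μ PP) :
    NP μ (canDatum μ PP hpos hPP hInv) Q = Bpart PP (partialSum μ (sInf Q)) := by
  obtain ⟨hi0, hi0mem, hQeq⟩ := canXi_mem hpos hPP hInv hQ
  have hDf : (canDatum μ PP hpos hPP hInv).f = canF μ PP := rfl
  have hDg : (canDatum μ PP hpos hPP hInv).g = canG μ PP := rfl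
  have hfpos : 0 < canF μ PP Q := by
    have := (canG_spec hpos hPP hInv hQ hi0mem).1
    omega
  ext x
  simp only [NP, Set.mem_iUnion, Set.mem_setOf_eq, hDf, hDg]
  constructor
  · rintro ⟨j, hjQ, t, htf, rfl⟩
    have hjP : j ∈ canP μ PP (sInf Q) := by rw [← hQeq]; exact hjQ
    have hjl : j < μ.length := hjP.1
    have hdvd : canF μ PP Q ∣ μ.getD j 0 := by
      have := canD_dvd hpos hPP hInv hi0 hjP
      unfold canF
      rwa [if_pos hQ]
    obtain ⟨hgf, hchar⟩ := canG_spec hpos hPP hInv hQ hjQ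
    have hbound := mult_bound hfpos hdvd htf
    have ho : canG μ PP Q j + t * canF μ PP Q < μ.getD j 0 := by omega
    have hmod : (canG μ PP Q j + t * canF μ PP Q) % canF μ PP Q = canG μ PP Q j := by
      rw [Nat.add_mul_mod_self_right, Nat.mod_eq_of_lt hgf]
    rw [Nat.add_assoc]
    exact (hchar _ ho).mpr hmod
  · intro hx
    have hC0 := Bpart_mem hPP (a_lt hpos hi0)
    have hxm : x < μ.sum := (hPP.1 _ hC0.1).2 hx
    obtain ⟨j, o, hjl, ho, rfl⟩ := exists_block' μ x hxm
    have hjP : j ∈ canP μ PP (sInf Q) := ⟨hjl, o, ho, hx⟩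
    have hjQ : j ∈ Q := by rw [hQeq]; exact hjP
    obtain ⟨hgf, hchar⟩ := canG_spec hpos hPP hInv hQ hjQ
    have hmod := (hchar o ho).mp hx
    refine ⟨j, hjQ, o / canF μ PP Q, ?_, ?_⟩
    · have h2 : o / canF μ PP Q * canF μ PP Q ≤ o := Nat.div_mul_le_self o _
      omega
    · have h3 := Nat.div_add_mod o (canF μ PP Q)
      rw [hmod] at h3
      rw [Nat.add_assoc]
      congr 1
      rw [Nat.mul_comm] at h3
      omega

lemma can_eta : eta μ (canDatum μ PP hpos hPP hInv) = PP := by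
  ext S
  simp only [eta, Set.mem_setOf_eq]
  constructor
  · rintro ⟨Q, hQ, r, hr, rfl⟩
    obtain ⟨hi0, _, _⟩ := canXi_mem hpos hPP hInv hQ
    rw [canNP hpos hPP hInv hQ]
    exact inv_iterate hInv r (Bpart_mem hPP (a_lt hpos hi0)).1
  · intro hS
    obtain ⟨⟨x, hxS⟩, hsub⟩ := hPP.1 S hS
    have hxm : x < μ.sum := hsub hxS
    obtain ⟨j, o, hjl, ho, rfl⟩ := exists_block' μ x hxm
    have hQxi : canP μ PP j ∈ canXi μ PP := ⟨j, hjl, rfl⟩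
    set Q := canP μ PP j with hQdef
    obtain ⟨hi0, hi0mem, hQeq⟩ := canXi_mem hpos hPP hInv hQxi
    have hjQ : j ∈ Q := mem_canP_self hpos hPP hjl
    have hC0 := Bpart_mem hPP (a_lt hpos hi0)
    obtain ⟨hgf, hchar⟩ := canG_spec hpos hPP hInv hQxi hjQ
    have hfw : canF μ PP Q ∣ μ.getD j 0 := by
      have := canD_dvd hpos hPP hInv hi0 (by rw [← hQeq]; exact hjQ)
      unfold canF
      rwa [if_pos hQxi]
    have hfw' : canF μ PP Q ≤ μ.getD j 0 := Nat.le_of_dvd (w_pos hpos hjl) hfw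
    set g := canG μ PP Q j with hgdef
    have hgw : g < μ.getD j 0 := by omega
    have hgC0 : partialSum μ j + g ∈ Bpart PP (partialSum μ (sInf Q)) := by
      rw [hchar g hgw]
      exact Nat.mod_eq_of_lt hgf
    have hshift := Bpart_shift hpos hPP hInv hjl hC0.1 hgw hgC0
    have hSit : S = (sigmaC μ)^[o] '' Bpart PP (partialSum μ j) :=
      part_is_iterate hpos hPP hInv hS hjl ho hxS
    refine ⟨Q, hQxi, o + (μ.getD j 0 - g), by omega, ?_⟩
    rw [canNP hpos hPP hInv hQxi, iterate_image_add, ← hshift, ← hSit]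

end Canonical2

lemma partition_subset_eq {n : ℕ} {X Y : Set (Set ℕ)} (hX : IsPartitionOn n X)
    (hY : IsPartitionOn n Y) (hsub : X ⊆ Y) : X = Y := by
  apply Set.Subset.antisymm hsub
  intro C hC
  obtain ⟨⟨x, hxC⟩, hCsub⟩ := hY.1 C hC
  have hx : x < n := hCsub hxC
  obtain ⟨B, ⟨hB, hxB⟩, hu⟩ := hX.2 x hx
  have hCB : C = B := part_eq hY hC (hsub hB) hxC hxB
  rw [hCB]; exact hB

lemma EtaDatum_ext {μ : List ℕ} {D D' : EtaDatum μ} (h1 : D.xi = D'.xi)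
    (h2 : D.f = D'.f) (h3 : D.g = D'.g) : D = D' := by
  cases D; cases D'
  cases h1; cases h2; cases h3
  rfl

section Unique

variable {μ : List ℕ} (hpos : ∀ c ∈ μ, 0 < c) (D : EtaDatum μ)

include hpos

lemma datum_f_pos {Q : Set ℕ} (hQ : Q ∈ D.xi) : 0 < D.f Q := by
  obtain ⟨⟨i, hiQ⟩, hsub⟩ := D.hxi.1 Q hQ
  have := D.hg Q hQ i hiQ
  omega

lemma datum_off_lt {Q : Set ℕ} (hQ : Q ∈ D.xi) {j t : ℕ} (hj : j ∈ Q)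
    (ht : t * D.f Q < μ.getD j 0) : D.g Q j + t * D.f Q < μ.getD j 0 := by
  have h1 := D.hg Q hQ j hj
  have h2 := mult_bound (datum_f_pos hpos D hQ) (D.hf Q hQ j hj) ht
  omega

lemma datum_f_le {Q : Set ℕ} (hQ : Q ∈ D.xi) {j : ℕ} (hj : j ∈ Q) :
    D.f Q ≤ μ.getD j 0 := by
  have hjl : j < μ.length := (D.hxi.1 Q hQ).2 hj
  exact Nat.le_of_dvd (w_pos hpos hjl) (D.hf Q hQ j hj)

lemma NP_fix {Q : Set ℕ} (hQ : Q ∈ D.xi) :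
    (sigmaC μ)^[D.f Q] '' NP μ D Q = NP μ D Q := by
  have hsub : Q ⊆ Set.Iio μ.length := (D.hxi.1 Q hQ).2
  have hfpos := datum_f_pos hpos D hQ
  apply Set.Subset.antisymm
  · rintro x ⟨y, hy, rfl⟩
    simp only [NP, Set.mem_iUnion, Set.mem_setOf_eq] at hy ⊢
    obtain ⟨j, hjQ, t, ht, rfl⟩ := hy
    have hjl : j < μ.length := hsub hjQ
    have hofflt := datum_off_lt hpos D hQ hjQ ht
    have hdvd := D.hf Q hQ j hjQ
    have hgj := D.hg Q hQ j hjQ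
    rw [Nat.add_assoc, sigmaC_iterate μ j _ _ hjl hofflt]
    have hb := mult_bound hfpos hdvd ht
    by_cases hcase : (t + 1) * D.f Q < μ.getD j 0
    · have hb2 := mult_bound hfpos hdvd hcase
      refine ⟨j, hjQ, t + 1, hcase, ?_⟩
      rw [Nat.mod_eq_of_lt (by nlinarith)]
      ring
    · -- (t+1) * f = w j, wraps to g
      have heq : (t + 1) * D.f Q = μ.getD j 0 := by nlinarith
      refine ⟨j, hjQ, 0, by simpa using w_pos hpos hjl, ?_⟩
      have h1 : D.g Q j + t * D.f Q + D.f Q = D.g Q j + μ.getD j 0 := by nlinarith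
      rw [h1, Nat.add_mod_right, Nat.mod_eq_of_lt (by omega)]
      simp
  · intro x hx
    simp only [NP, Set.mem_iUnion, Set.mem_setOf_eq] at hx
    obtain ⟨j, hjQ, t, ht, rfl⟩ := hx
    have hjl : j < μ.length := hsub hjQ
    have hdvd := D.hf Q hQ j hjQ
    have hgj := D.hg Q hQ j hjQ
    have hw := w_pos hpos hjl
    rcases Nat.eq_zero_or_pos t with rfl | htpos
    · -- preimage is the top element
      obtain ⟨k, hk⟩ := hdvd
      have hk1 : 1 ≤ k := by nlinarith
      have htop : (k - 1) * D.f Q < μ.getD j 0 := by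
        have : (k - 1) * D.f Q + D.f Q = μ.getD j 0 := by
          rw [hk]; cases k with
          | zero => omega
          | succ k' => simp only [Nat.add_sub_cancel]; ring
        omega
      refine ⟨partialSum μ j + D.g Q j + (k - 1) * D.f Q, ?_, ?_⟩
      · simp only [NP, Set.mem_iUnion, Set.mem_setOf_eq]
        exact ⟨j, hjQ, k - 1, htop, rfl⟩
      · have hofflt := datum_off_lt hpos D hQ hjQ htop
        rw [Nat.add_assoc, sigmaC_iterate μ j _ _ hjl hofflt]
        have h1 : D.g Q j + (k - 1) * D.f Q + D.f Q = D.g Q j + μ.getD j 0 := by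
          have : (k - 1) * D.f Q + D.f Q = μ.getD j 0 := by
            rw [hk]; cases k with
            | zero => omega
            | succ k' => simp only [Nat.add_sub_cancel]; ring
          omega
        rw [h1, Nat.add_mod_right, Nat.mod_eq_of_lt (by omega)]
        simp
    · -- preimage with t - 1
      have ht' : (t - 1) * D.f Q < μ.getD j 0 := by
        have : (t - 1) * D.f Q ≤ t * D.f Q := Nat.mul_le_mul_right _ (by omega)
        omega
      refine ⟨partialSum μ j + D.g Q j + (t - 1) * D.f Q, ?_, ?_⟩
      · simp only [NP, Set.mem_iUnion, Set.mem_setOf_eq]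
        exact ⟨j, hjQ, t - 1, ht', rfl⟩
      · have hofflt := datum_off_lt hpos D hQ hjQ ht'
        rw [Nat.add_assoc, sigmaC_iterate μ j _ _ hjl hofflt]
        have hofflt2 := datum_off_lt hpos D hQ hjQ ht
        have h1 : D.g Q j + (t - 1) * D.f Q + D.f Q = D.g Q j + t * D.f Q := by
          have : (t - 1) * D.f Q + D.f Q = t * D.f Q := by
            cases t with
            | zero => omega
            | succ t' => simp only [Nat.add_sub_cancel]; ring
          omega
        rw [h1, Nat.mod_eq_of_lt hofflt2, Nat.add_assoc]

end Unique

section Unique2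

variable {μ : List ℕ} {PP : Set (Set ℕ)} (hpos : ∀ c ∈ μ, 0 < c)
  (hPP : IsPartitionOn μ.sum PP) (hInv : Invariant (sigmaC μ) PP)

include hpos hPP hInv

lemma eta_unique (D : EtaDatum μ) (hD : eta μ D = PP) :
    D = canDatum μ PP hpos hPP hInv := by
  have hNPP : ∀ Q ∈ D.xi, NP μ D Q ∈ PP := by
    intro Q hQ
    rw [← hD]
    exact ⟨Q, hQ, D.f Q, datum_f_pos hpos D hQ, (NP_fix hpos D hQ).symm⟩
  have hsInf : ∀ Q ∈ D.xi, sInf Q ∈ Q := fun Q hQ => Nat.sInf_mem (D.hxi.1 Q hQ).1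
  have haiNP : ∀ Q ∈ D.xi, partialSum μ (sInf Q) ∈ NP μ D Q := by
    intro Q hQ
    simp only [NP, Set.mem_iUnion, Set.mem_setOf_eq]
    refine ⟨sInf Q, hsInf Q hQ, 0, ?_, ?_⟩
    · simpa using w_pos hpos ((D.hxi.1 Q hQ).2 (hsInf Q hQ))
    · rw [D.hgmin Q hQ]; simp
  have hNPB : ∀ Q ∈ D.xi, NP μ D Q = Bpart PP (partialSum μ (sInf Q)) :=
    fun Q hQ => Bpart_eq hPP (hNPP Q hQ) (haiNP Q hQ)
  have hNPblock : ∀ Q ∈ D.xi, ∀ j, j < μ.length → ∀ o, o < μ.getD j 0 →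
      partialSum μ j + o ∈ NP μ D Q →
      j ∈ Q ∧ ∃ t, t * D.f Q < μ.getD j 0 ∧ o = D.g Q j + t * D.f Q := by
    intro Q hQ j hjl o ho hmem
    simp only [NP, Set.mem_iUnion, Set.mem_setOf_eq] at hmem
    obtain ⟨j', hj'Q, t, ht, heq⟩ := hmem
    have hj'l : j' < μ.length := (D.hxi.1 Q hQ).2 hj'Q
    have hoff := datum_off_lt hpos D hQ hj'Q ht
    have hjj : j' = j := by
      apply block_unique μ hj'l hjl (x := partialSum μ j + o) <;> omega
    subst hjj
    exact ⟨hj'Q, t, ht, by omega⟩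
  have hQcan : ∀ Q ∈ D.xi, Q = canP μ PP (sInf Q) := by
    intro Q hQ
    ext j
    simp only [canP, Set.mem_setOf_eq]
    constructor
    · intro hjQ
      have hjl : j < μ.length := (D.hxi.1 Q hQ).2 hjQ
      have hglt := D.hg Q hQ j hjQ
      have hfw := datum_f_le hpos D hQ hjQ
      refine ⟨hjl, D.g Q j, by omega, ?_⟩
      rw [← hNPB Q hQ]
      simp only [NP, Set.mem_iUnion, Set.mem_setOf_eq]
      exact ⟨j, hjQ, 0, by simpa using w_pos hpos hjl, by simp⟩
    · rintro ⟨hjl, o, ho, hmem⟩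
      rw [← hNPB Q hQ] at hmem
      exact (hNPblock Q hQ j hjl o ho hmem).1
  have hxi_sub : D.xi ⊆ canXi μ PP := by
    intro Q hQ
    exact ⟨sInf Q, (D.hxi.1 Q hQ).2 (hsInf Q hQ), hQcan Q hQ⟩
  have hxi_eq : D.xi = canXi μ PP :=
    partition_subset_eq D.hxi (canXi_partition hpos hPP hInv) hxi_sub
  have hf_eq : D.f = canF μ PP := by
    funext Q
    by_cases hQ : Q ∈ D.xi
    · have hQxi : Q ∈ canXi μ PP := hxi_sub hQ
      have hi0Q := hsInf Q hQ
      have hi0 : sInf Q < μ.length := (D.hxi.1 Q hQ).2 hi0Q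
      have hfpos := datum_f_pos hpos D hQ
      have hB := hNPB Q hQ
      have hfix : (sigmaC μ)^[D.f Q] '' Bpart PP (partialSum μ (sInf Q)) =
          Bpart PP (partialSum μ (sInf Q)) := by
        rw [← hB]; exact NP_fix hpos D hQ
      have hle : canD μ PP (sInf Q) ≤ D.f Q := canD_le hpos hPP hInv hi0 hfpos hfix
      have hge : D.f Q ≤ canD μ PP (sInf Q) := by
        by_contra hlt
        push_neg at hlt
        obtain ⟨hd1, hd2, _⟩ := canD_spec hpos hPP hInv hi0
        have hfle := datum_f_le hpos D hQ hi0Q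
        have hrw : canD μ PP (sInf Q) < μ.getD (sInf Q) 0 := by omega
        have hmem2 : partialSum μ (sInf Q) + canD μ PP (sInf Q) ∈
            Bpart PP (partialSum μ (sInf Q)) := by
          rw [← hd2]
          refine ⟨partialSum μ (sInf Q), (Bpart_mem hPP (a_lt hpos hi0)).2, ?_⟩
          have := sigmaC_iterate μ (sInf Q) 0 (canD μ PP (sInf Q)) hi0 (w_pos hpos hi0)
          rwa [Nat.add_zero, Nat.zero_add, Nat.mod_eq_of_lt hrw] at this
        rw [← hB] at hmem2
        obtain ⟨_, t, ht, heq⟩ := hNPblock Q hQ (sInf Q) hi0 _ hrw hmem2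
        rw [D.hgmin Q hQ] at heq
        rcases Nat.eq_zero_or_pos t with rfl | htp
        · simp at heq; omega
        · have : D.f Q ≤ t * D.f Q := Nat.le_mul_of_pos_left _ htp
          omega
      have heqf : D.f Q = canD μ PP (sInf Q) := le_antisymm hge hle
      rw [heqf]
      unfold canF
      rw [if_pos hQxi]
    · have h2 : Q ∉ canXi μ PP := by rw [← hxi_eq]; exact hQ
      rw [D.hf0 Q hQ]
      unfold canF
      rw [if_neg h2]
  have hg_eq : D.g = canG μ PP := by
    funext Q j
    by_cases h : Q ∈ D.xi ∧ j ∈ Q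
    · obtain ⟨hQ, hjQ⟩ := h
      have hQxi : Q ∈ canXi μ PP := hxi_sub hQ
      have hjl : j < μ.length := (D.hxi.1 Q hQ).2 hjQ
      obtain ⟨hgf, hchar⟩ := canG_spec hpos hPP hInv hQxi hjQ
      have hglt : D.g Q j < D.f Q := D.hg Q hQ j hjQ
      have hfw := datum_f_le hpos D hQ hjQ
      have hmem : partialSum μ j + D.g Q j ∈ Bpart PP (partialSum μ (sInf Q)) := by
        rw [← hNPB Q hQ]
        simp only [NP, Set.mem_iUnion, Set.mem_setOf_eq]
        exact ⟨j, hjQ, 0, by simpa using w_pos hpos hjl, by simp⟩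
      have hmm := (hchar (D.g Q j) (by omega)).mp hmem
      rw [← hf_eq, Nat.mod_eq_of_lt hglt] at hmm
      exact hmm
    · have h2 : ¬(Q ∈ canXi μ PP ∧ j ∈ Q) := by rw [← hxi_eq]; exact h
      rw [D.hg0 Q j (by tauto)]
      unfold canG
      rw [if_neg h2]
  exact EtaDatum_ext hxi_eq hf_eq hg_eq

end Unique2


end Aux

/-- (1) For any permutation `σ` of `{0,…,m-1}`, the set of set partitions of
`{0,…,m-1}` fixed setwise by `σ` is nonempty and closed under common
refinement. (2) For `σ = σ_μ`, a product of disjoint cycles of lengths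
`μ_1,…,μ_l` covering `{0,…,m-1}`, every `σ_μ`-invariant set partition is
uniquely of the form `η(ξ, f, {g_P})`. -/
theorem invariant_partitions (m : ℕ) :
    (∀ σ : ℕ → ℕ, Set.BijOn σ (Set.Iio m) (Set.Iio m) →
      {PP : Set (Set ℕ) | IsPartitionOn m PP ∧ Invariant σ PP}.Nonempty ∧
      ∀ PP QQ, IsPartitionOn m PP ∧ Invariant σ PP →
        IsPartitionOn m QQ ∧ Invariant σ QQ →
        IsPartitionOn m (commonRefinement PP QQ) ∧
          Invariant σ (commonRefinement PP QQ)) ∧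
    (∀ μ : List ℕ, (∀ c ∈ μ, 0 < c) → μ.sum = m →
      ∀ PP : Set (Set ℕ), IsPartitionOn m PP → Invariant (sigmaC μ) PP →
        ∃! D : EtaDatum μ, eta μ D = PP) := by
  constructor
  · intro σ hσ
    exact Aux.part1 m σ hσ
  · intro μ hpos hsum PP hPP hInv
    subst hsum
    exact ⟨Aux.canDatum μ PP hpos hPP hInv, Aux.can_eta hpos hPP hInv,
      fun D hD => Aux.eta_unique hpos hPP hInv D hD⟩
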